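/- The posterior covariance Σ_m = Σ₀ − Σ₀ Aᵀ S_m Λ_m⁻¹ S_mᵀ A Σ₀ is symmetric positive semidefinite and satisfies Σ_m Aᵀ S_m = 0; that is, the posterior covariance annihilates the explored directions Aᵀ s₁, …, Aᵀ s_m. -/

import Mathlib

open Matrix

/-- The posterior covariance `Σ_m = Σ₀ − Σ₀ Aᵀ S Λ⁻¹ Sᵀ A Σ₀` is symmetric
positive semidefinite and annihilates the explored directions: `Σ_m Aᵀ S = 0`. -/
theorem posterior_covariance_psd_and_annihilates
    (d m : ℕ) (hm : m ≤ d)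
    (A : Matrix (Fin d) (Fin d) ℝ) (hA : IsUnit A)
    (Sigma0 : Matrix (Fin d) (Fin d) ℝ) (hSigma0 : Sigma0.PosDef)
    (S : Matrix (Fin d) (Fin m) ℝ)
    (hS : LinearIndependent ℝ (fun j : Fin m => fun i : Fin d => S i j))
    (Λm : Matrix (Fin m) (Fin m) ℝ) (hΛm : Λm = Sᵀ * A * Sigma0 * Aᵀ * S)
    (Sigmam : Matrix (Fin d) (Fin d) ℝ)
    (hSigmam : Sigmam = Sigma0 - Sigma0 * Aᵀ * S * Λm⁻¹ * Sᵀ * A * Sigma0) :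
    Sigmam.PosSemidef ∧ Sigmam * Aᵀ * S = 0 := by
  -- notation
  set B : Matrix (Fin d) (Fin m) ℝ := Aᵀ * S with hB
  have hBt : Bᵀ = Sᵀ * A := by
    rw [hB, transpose_mul, transpose_transpose]
  have hCT : ∀ {p q : ℕ} (M : Matrix (Fin p) (Fin q) ℝ), Mᴴ = Mᵀ := by
    intro p q M; ext i j; simp
  -- injectivity of B.mulVec
  have hSinj : Function.Injective S.mulVec := by
    rw [Matrix.mulVec_injective_iff]
    exact hS
  have hAinj : Function.Injective (Aᵀ).mulVec := by
    rw [Matrix.mulVec_injective_iff_isUnit]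
    rwa [Matrix.isUnit_iff_isUnit_det, Matrix.det_transpose, ← Matrix.isUnit_iff_isUnit_det]
  have hBinj : Function.Injective B.mulVec := by
    intro x y hxy
    apply hSinj; apply hAinj
    simpa [hB, ← Matrix.mulVec_mulVec] using hxy
  -- Λm is positive definite
  have hΛeq : Λm = Bᵀ * Sigma0 * B := by rw [hΛm, hBt, hB]; simp only [Matrix.mul_assoc]
  have hΛpd : Λm.PosDef := by
    rw [hΛeq]
    rw [posDef_iff_dotProduct_mulVec]
    constructor
    · rw [← hCT B]
      exact Matrix.isHermitian_conjTranspose_mul_mul B hSigma0.1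
    · intro x hx
      have hBx : B *ᵥ x ≠ 0 := by
        intro h
        exact hx (hBinj (by simpa using h))
      have := hSigma0.dotProduct_mulVec_pos hBx
      simpa only [← hCT B, star_mulVec, dotProduct_mulVec, vecMul_vecMul,
        Matrix.mul_assoc] using this
  have hΛdet : IsUnit Λm.det := hΛpd.det_pos.ne'.isUnit
  have hinv : Λm⁻¹ * Λm = 1 := Matrix.nonsing_inv_mul Λm hΛdet
  have hΛsymm : Λmᵀ = Λm := by
    have := hΛpd.1
    rwa [Matrix.IsHermitian, hCT] at this
  have hΛisymm : (Λm⁻¹)ᵀ = Λm⁻¹ := by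
    rw [Matrix.transpose_nonsing_inv, hΛsymm]
  -- annihilation
  have hann : Sigmam * Aᵀ * S = 0 := by
    have key : Sigma0 * Aᵀ * S * Λm⁻¹ * Sᵀ * A * Sigma0 * Aᵀ * S
        = Sigma0 * Aᵀ * S * (Λm⁻¹ * Λm) := by
      rw [hΛm]; simp only [Matrix.mul_assoc]
    rw [hSigmam, Matrix.sub_mul, Matrix.sub_mul, key, hinv, Matrix.mul_one, sub_self]
  refine ⟨?_, hann⟩
  -- positive semidefiniteness
  obtain ⟨L, hLpsd, hLmul⟩ : ∃ L : Matrix (Fin d) (Fin d) ℝ,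
      L.PosSemidef ∧ L * L = Sigma0 :=
    open scoped MatrixOrder in
    ⟨CFC.sqrt Sigma0, Matrix.nonneg_iff_posSemidef.mp (CFC.sqrt_nonneg Sigma0),
      CFC.sqrt_mul_sqrt_self Sigma0 (Matrix.nonneg_iff_posSemidef.mpr hSigma0.posSemidef)⟩
  have hLsymm : Lᵀ = L := by
    have := hLpsd.1; rwa [Matrix.IsHermitian, hCT] at this
  set P : Matrix (Fin d) (Fin d) ℝ := L * B * Λm⁻¹ * Bᵀ * L with hP
  have hPsymm : Pᵀ = P := by
    rw [hP]
    simp only [Matrix.transpose_mul, Matrix.transpose_transpose, hLsymm, hΛisymm]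
    simp only [Matrix.mul_assoc]
  have hPidem : P * P = P := by
    have : P * P = L * B * (Λm⁻¹ * (Bᵀ * (L * L) * B) * Λm⁻¹) * Bᵀ * L := by
      rw [hP]; simp only [Matrix.mul_assoc]
    rw [this, hLmul, ← hΛeq, hinv, Matrix.one_mul, hP]
  have hQ : (1 - P) = (1 - P)ᴴ * (1 - P) := by
    rw [hCT, Matrix.transpose_sub, Matrix.transpose_one, hPsymm]
    rw [Matrix.sub_mul, Matrix.mul_sub, Matrix.mul_sub, hPidem]
    simp [Matrix.mul_one, Matrix.one_mul]
  have hQpsd : (1 - P).PosSemidef := by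
    rw [hQ]; exact Matrix.posSemidef_conjTranspose_mul_self _
  have hSeq : Sigmam = L * (1 - P) * Lᴴ := by
    rw [hCT, hLsymm, hSigmam, hP]
    have : L * (1 - L * B * Λm⁻¹ * Bᵀ * L) * L
        = L * L - (L * L) * B * Λm⁻¹ * Bᵀ * (L * L) := by
      rw [Matrix.mul_sub, Matrix.sub_mul, Matrix.mul_one]
      simp only [Matrix.mul_assoc]
    rw [this, hLmul, hBt, hB]
    simp only [Matrix.mul_assoc]
  rw [hSeq]
  exact hQpsd.mul_mul_conjTranspose_same L
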